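/- Let G be a connected graph with layering tree 𝒯 from root s. For every part P' at layer k ≥ 1, P' has exactly one neighbor in 𝒯 among parts at layer k − 1 (its parent); all other neighbors of P' in 𝒯 are parts at layer k + 1. -/
import Mathlib


/-- `ReachWithin G S u v`: there is a `u`-`v` walk in `G` all of whose vertices lie in `S`. -/
def ReachWithin {V : Type*} (G : SimpleGraph V) (S : Set V) (u v : V) : Prop :=
  ∃ p : G.Walk u v, ∀ x ∈ p.support, x ∈ S

/-- The part at layer `k` containing `u`. -/
def LayerPart {V : Type*} (G : SimpleGraph V) (s : V) (k : ℕ) (u : V) : Set V :=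
  {v | G.dist s v = k ∧ ReachWithin G {x | k ≤ G.dist s x} u v}

/-- `P` is a part at layer `k` of the BFS layering of `G` from `s`. -/
def IsPartAt {V : Type*} (G : SimpleGraph V) (s : V) (k : ℕ) (P : Set V) : Prop :=
  ∃ u : V, G.dist s u = k ∧ P = LayerPart G s k u

/-- Adjacency of parts in the layering tree: distinct parts containing `G`-adjacent
vertices. -/
def PartAdj {V : Type*} (G : SimpleGraph V) (P Q : Set V) : Prop :=
  P ≠ Q ∧ ∃ a ∈ P, ∃ b ∈ Q, G.Adj a b

section Helpers

variable {V : Type*} {G : SimpleGraph V} {S T : Set V} {u v w s a b : V} {k : ℕ}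

lemma ReachWithin.rfl (hu : u ∈ S) : ReachWithin G S u u :=
  ⟨SimpleGraph.Walk.nil, by intro x hx; simp at hx; simpa [hx] using hu⟩

lemma ReachWithin.symm (h : ReachWithin G S u v) : ReachWithin G S v u := by
  obtain ⟨p, hp⟩ := h
  exact ⟨p.reverse, fun x hx => hp x (by simpa using hx)⟩

lemma ReachWithin.trans (h1 : ReachWithin G S u v) (h2 : ReachWithin G S v w) :
    ReachWithin G S u w := by
  obtain ⟨p, hp⟩ := h1; obtain ⟨q, hq⟩ := h2
  refine ⟨p.append q, fun x hx => ?_⟩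
  rcases (SimpleGraph.Walk.mem_support_append_iff p q).1 hx with h | h
  · exact hp x h
  · exact hq x h

lemma ReachWithin.mono (hST : S ⊆ T) (h : ReachWithin G S u v) : ReachWithin G T u v := by
  obtain ⟨p, hp⟩ := h; exact ⟨p, fun x hx => hST (hp x hx)⟩

lemma mem_layerPart_self (hd : G.dist s u = k) : u ∈ LayerPart G s k u :=
  ⟨hd, ReachWithin.rfl (by simp [hd])⟩

lemma layerPart_eq (h : ReachWithin G {x | k ≤ G.dist s x} u w) :
    LayerPart G s k u = LayerPart G s k w := by
  ext v
  exact ⟨fun hv => ⟨hv.1, h.symm.trans hv.2⟩, fun hv => ⟨hv.1, h.trans hv.2⟩⟩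

lemma dist_adj_le (hconn : G.Connected) (h : G.Adj a b) :
    G.dist s b ≤ G.dist s a + 1 := by
  have h1 : G.dist a b ≤ 1 := by
    simpa using SimpleGraph.dist_le (SimpleGraph.Walk.cons h SimpleGraph.Walk.nil)
  calc G.dist s b ≤ G.dist s a + G.dist a b := hconn.dist_triangle
    _ ≤ G.dist s a + 1 := by omega

lemma exists_prev (hconn : G.Connected) (hd : G.dist s u = k) (hk : 1 ≤ k) :
    ∃ a, G.Adj u a ∧ G.dist s a = k - 1 := by
  obtain ⟨p, hp⟩ := (hconn.preconnected s u).exists_walk_length_eq_dist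
  have hlen : p.reverse.length = k := by
    rw [SimpleGraph.Walk.length_reverse, hp, hd]
  have hnn : ¬ p.reverse.Nil := by
    rw [SimpleGraph.Walk.nil_iff_length_eq, hlen]; omega
  obtain ⟨a, h, q, hq⟩ := (SimpleGraph.Walk.not_nil_iff).1 hnn
  have hql : q.length = k - 1 := by
    rw [hq] at hlen; simp only [SimpleGraph.Walk.length_cons] at hlen; omega
  refine ⟨a, h, ?_⟩
  have h1 : G.dist s a ≤ k - 1 := by
    have := SimpleGraph.dist_le q.reverse
    rwa [SimpleGraph.Walk.length_reverse, hql] at this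
  have h2 : G.dist s u ≤ G.dist s a + 1 := dist_adj_le hconn h.symm
  omega

end Helpers

/-- Every part `P` at layer `k ≥ 1` has exactly one neighbor in the layering tree among
parts at layer `k - 1` (its parent), and every other neighbor of `P` is a part at layer
`k + 1`. -/
theorem layeringTree_unique_parent {V : Type*} (G : SimpleGraph V) (hconn : G.Connected)
    (s : V) (k : ℕ) (hk : 1 ≤ k) (P : Set V) (hP : IsPartAt G s k P) :
    (∃! Q : Set V, IsPartAt G s (k - 1) Q ∧ PartAdj G P Q) ∧
    (∀ (m : ℕ) (Q : Set V), IsPartAt G s m Q → PartAdj G P Q →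
      m = k - 1 ∨ m = k + 1) := by
  obtain ⟨u, hu, rfl⟩ := hP
  obtain ⟨a₀, ha₀u, ha₀⟩ := exists_prev hconn hu hk
  -- any layer-(k-1) vertex adjacent to a vertex of P lies in the same (k-1)-part as a₀
  have key : ∀ a b, a ∈ LayerPart G s k u → G.Adj a b → G.dist s b = k - 1 →
      LayerPart G s (k-1) b = LayerPart G s (k-1) a₀ := by
    intro a b ha hab hb
    apply layerPart_eq
    obtain ⟨had, ⟨p, hp⟩⟩ := ha
    refine ⟨(SimpleGraph.Walk.cons hab.symm p.reverse).concat ha₀u, ?_⟩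
    intro x hx
    simp only [SimpleGraph.Walk.support_concat, SimpleGraph.Walk.support_cons,
      List.concat_eq_append, List.cons_append, List.mem_cons, List.mem_append,
      SimpleGraph.Walk.support_reverse, List.mem_reverse, List.mem_singleton] at hx
    rcases hx with rfl | hx | rfl | h
    · simp only [Set.mem_setOf_eq, hb]; omega
    · have := hp x hx
      simp only [Set.mem_setOf_eq] at this ⊢
      omega
    · simp only [Set.mem_setOf_eq, ha₀]; omega
    · simp at h
  have hPne : LayerPart G s k u ≠ LayerPart G s (k-1) a₀ := by
    intro h
    have := (h ▸ mem_layerPart_self hu).1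
    rw [hu] at this; omega
  constructor
  · refine ⟨LayerPart G s (k-1) a₀, ⟨⟨a₀, ha₀, Eq.refl _⟩, hPne, u, mem_layerPart_self hu,
      a₀, mem_layerPart_self ha₀, ha₀u⟩, ?_⟩
    rintro Q ⟨⟨w, hw, rfl⟩, _, a, ha, b, hb, hab⟩
    have hbw : LayerPart G s (k-1) w = LayerPart G s (k-1) b := layerPart_eq hb.2
    rw [hbw]
    exact key a b ha hab hb.1
  · rintro m Q ⟨w, hw, rfl⟩ ⟨hne, a, ha, b, hb, hab⟩
    have hda : G.dist s a = k := ha.1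
    have hdb : G.dist s b = m := hb.1
    have h1 : G.dist s b ≤ G.dist s a + 1 := dist_adj_le hconn hab
    have h2 : G.dist s a ≤ G.dist s b + 1 := dist_adj_le hconn hab.symm
    have hmk : m ≠ k := by
      rintro rfl
      apply hne
      apply layerPart_eq
      refine ha.2.trans (ReachWithin.trans ?_ hb.2.symm)
      refine ⟨SimpleGraph.Walk.cons hab SimpleGraph.Walk.nil, ?_⟩
      intro x hx
      simp only [SimpleGraph.Walk.support_cons, SimpleGraph.Walk.support_nil,
        List.mem_cons, List.mem_singleton] at hx
      rcases hx with rfl | rfl | h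
      · simp [hda]
      · simp [hdb]
      · simp at h
    omega
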